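/- Let 0 < q1 < q2 < 1, a, b, c ∈ ℝ, c > 0, ω > 0. The purely imaginary number iω satisfies (iω)^{q1+q2} + a(iω)^{q2} + b(iω)^{q1} + c = 0 (principal branches) if and only if a = c·ρ1·ω^{−q2} − ρ2·ω^{q1} and b = ρ1·ω^{q2} − c·ρ2·ω^{−q1}, where ρ1 = sin(q1π/2)/sin((q2−q1)π/2) and ρ2 = sin(q2π/2)/sin((q2−q1)π/2). -/

import Mathlib

open Real Complex

lemma aux_cpow (ω q : ℝ) (hω : 0 < ω) :
    (Complex.I * ω) ^ (q : ℂ)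
      = ((ω ^ q * Real.cos (q * π / 2) : ℝ) : ℂ)
        + ((ω ^ q * Real.sin (q * π / 2) : ℝ) : ℂ) * Complex.I := by
  have hz : (Complex.I * (ω:ℂ)) ≠ 0 := by
    simp [Complex.ext_iff, hω.ne']
  have hlog : Complex.log (Complex.I * ω) = (Real.log ω : ℂ) + ((π/2 : ℝ) : ℂ) * Complex.I := by
    rw [Complex.log]
    have habs : ‖(Complex.I * ω : ℂ)‖ = ω := by
      simp [abs_of_pos hω]
    have harg : Complex.arg (Complex.I * ω) = π/2 := by
      rw [Complex.arg_eq_pi_div_two_iff]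
      simp [hω]
    rw [habs, harg]
  rw [Complex.cpow_def_of_ne_zero hz, hlog]
  rw [mul_comm, mul_add, Complex.exp_add]
  have h1 : Complex.exp ((q:ℂ) * (Real.log ω : ℂ)) = ((ω ^ q : ℝ) : ℂ) := by
    rw [← Complex.ofReal_mul, ← Complex.ofReal_exp, Real.rpow_def_of_pos hω, mul_comm]
  have h2 : Complex.exp ((q:ℂ) * (((π/2 : ℝ) : ℂ) * Complex.I))
      = ((Real.cos (q * π / 2) : ℝ) : ℂ) + ((Real.sin (q * π / 2) : ℝ) : ℂ) * Complex.I := by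
    rw [← mul_assoc, ← Complex.ofReal_mul, Complex.exp_mul_I]
    rw [← Complex.ofReal_cos, ← Complex.ofReal_sin]
    norm_num [mul_div_assoc]
  rw [h1, h2]
  push_cast
  ring

theorem stmt13 (q1 q2 a b c ω : ℝ) (h1 : 0 < q1) (h2 : q1 < q2) (h3 : q2 < 1)
    (hc : 0 < c) (hω : 0 < ω)
    (ρ1 ρ2 : ℝ)
    (hρ1 : ρ1 = Real.sin (q1 * π / 2) / Real.sin ((q2 - q1) * π / 2))
    (hρ2 : ρ2 = Real.sin (q2 * π / 2) / Real.sin ((q2 - q1) * π / 2)) :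
    ((Complex.I * ω) ^ ((q1 : ℂ) + q2) + (a : ℂ) * (Complex.I * ω) ^ (q2 : ℂ)
        + (b : ℂ) * (Complex.I * ω) ^ (q1 : ℂ) + (c : ℂ) = 0)
      ↔ (a = c * ρ1 * ω ^ (-q2) - ρ2 * ω ^ q1 ∧ b = ρ1 * ω ^ q2 - c * ρ2 * ω ^ (-q1)) := by
  subst hρ1 hρ2
  -- abbreviations
  set sx := Real.sin (q1 * π / 2) with hsx
  set cx := Real.cos (q1 * π / 2) with hcx
  set sy := Real.sin (q2 * π / 2) with hsy
  set cy := Real.cos (q2 * π / 2) with hcy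
  set u := ω ^ q1 with hu
  set v := ω ^ q2 with hv
  have hupos : 0 < u := Real.rpow_pos_of_pos hω _
  have hvpos : 0 < v := Real.rpow_pos_of_pos hω _
  have hsub : (q2 - q1) * π / 2 = q2 * π / 2 - q1 * π / 2 := by ring
  have hsdval : Real.sin ((q2 - q1) * π / 2) = sy * cx - cy * sx := by
    rw [hsub, Real.sin_sub]
  have hsdpos : 0 < Real.sin ((q2 - q1) * π / 2) := by
    apply Real.sin_pos_of_pos_of_lt_pi
    · have : 0 < q2 - q1 := by linarith
      positivity
    · have hπ : 0 < π := Real.pi_pos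
      rw [hsub]
      nlinarith [Real.pi_pos]
  have hsd : sy * cx - cy * sx > 0 := hsdval ▸ hsdpos
  have hsdne : sy * cx - cy * sx ≠ 0 := ne_of_gt hsd
  have hpx : sx ^ 2 + cx ^ 2 = 1 := Real.sin_sq_add_cos_sq _
  have hpy : sy ^ 2 + cy ^ 2 = 1 := Real.sin_sq_add_cos_sq _
  have hnegq2 : ω ^ (-q2) = v⁻¹ := by rw [hv, ← Real.rpow_neg hω.le]
  have hnegq1 : ω ^ (-q1) = u⁻¹ := by rw [hu, ← Real.rpow_neg hω.le]
  -- rewrite complex LHS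
  have hadd : (q1 + q2) * π / 2 = q1 * π / 2 + q2 * π / 2 := by ring
  have hrw : (Complex.I * ω) ^ ((q1 : ℂ) + q2) + (a : ℂ) * (Complex.I * ω) ^ (q2 : ℂ)
        + (b : ℂ) * (Complex.I * ω) ^ (q1 : ℂ) + (c : ℂ)
      = ((u * v * (cx * cy - sx * sy) + a * v * cy + b * u * cx + c : ℝ) : ℂ)
        + ((u * v * (sx * cy + cx * sy) + a * v * sy + b * u * sx : ℝ) : ℂ) * Complex.I := by
    have e1 := aux_cpow ω q1 hω
    have e2 := aux_cpow ω q2 hω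
    have e3 := aux_cpow ω (q1 + q2) hω
    rw [hadd, Real.cos_add, Real.sin_add, Real.rpow_add hω] at e3
    rw [show ((q1 : ℂ) + q2) = (((q1 + q2 : ℝ)) : ℂ) by push_cast; ring]
    rw [e1, e2, e3, ← hsx, ← hcx, ← hsy, ← hcy, ← hu, ← hv]
    push_cast
    ring
  rw [hrw, hsdval, hnegq1, hnegq2]
  have hsplit : ∀ x y : ℝ, (x:ℂ) + (y:ℂ) * Complex.I = 0 ↔ x = 0 ∧ y = 0 := by
    intro x y
    constructor
    · intro h
      have hre := congrArg Complex.re h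
      have him := congrArg Complex.im h
      simp at hre him
      exact ⟨hre, him⟩
    · rintro ⟨hx, hy⟩; simp [hx, hy]
  rw [hsplit]
  constructor
  · rintro ⟨E1, E2⟩
    have ha' : a * (v * (sy * cx - cy * sx)) = c * sx - u * v * sy := by
      linear_combination (-sx) * E1 + cx * E2 + (-(u * v * sy)) * hpx
    have hb' : b * (u * (sy * cx - cy * sx)) = u * v * sx - c * sy := by
      linear_combination sy * E1 - cy * E2 + u * v * sx * hpy
    have hvsd : v * (sy * cx - cy * sx) ≠ 0 := by positivity
    have husd : u * (sy * cx - cy * sx) ≠ 0 := by positivity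
    constructor
    · rw [(eq_div_iff hvsd).mpr ha']
      field_simp
    · rw [(eq_div_iff husd).mpr hb']
      field_simp
  · rintro ⟨ha, hb⟩
    have ha' : a * (v * (sy * cx - cy * sx)) = c * sx - u * v * sy := by
      rw [ha]; linear_combination (c * sx * v * v⁻¹ - sy * u * v) * mul_inv_cancel₀ hsdne + c * sx * mul_inv_cancel₀ hvpos.ne'
    have hb' : b * (u * (sy * cx - cy * sx)) = u * v * sx - c * sy := by
      rw [hb]; linear_combination (u * v * sx - c * sy * u * u⁻¹) * mul_inv_cancel₀ hsdne - c * sy * mul_inv_cancel₀ hupos.ne'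
    constructor
    · have hE1 : (u * v * (cx * cy - sx * sy) + a * v * cy + b * u * cx + c)
          * (sy * cx - cy * sx) = 0 := by
        linear_combination cy * ha' + cx * hb' + (u * v * sy * cy) * hpx
          + (-(u * v * sx * cx)) * hpy
      rcases mul_eq_zero.mp hE1 with h | h
      · exact h
      · exact absurd h hsdne
    · have hE2 : (u * v * (sx * cy + cx * sy) + a * v * sy + b * u * sx)
          * (sy * cx - cy * sx) = 0 := by
        linear_combination sy * ha' + sx * hb' + (u * v * sy ^ 2) * hpx
          + (-(u * v * sx ^ 2)) * hpy
      rcases mul_eq_zero.mp hE2 with h | h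
      · exact h
      · exact absurd h hsdne
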